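/- Let L ∈ 𝐋, V, W ∈ 𝐕(L) and w ∈ [0,1). Let (uₙ)ₙ be a sequence in [0,1] converging to 0 and, for each n, let Oⁿ ∈ 𝐎*(L+uₙV, L+wW). Then every accumulation point of the sequence (Oⁿ)ₙ with respect to the Frobenius norm lies in 𝐎*(L,L). -/

import Mathlib

open Matrix Filter Topology

/-- Square matrices of size `dT × dT`, indexed by blocks: index `(t, i)` is
row/column `i` within block `t`. -/
abbrev Mat (d T : ℕ) := Matrix (Fin T × Fin d) (Fin T × Fin d) ℝ

/-- The `t`-th diagonal `d × d` block of a `dT × dT` matrix. -/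
def blk {d T : ℕ} (A : Mat d T) (t : Fin T) : Matrix (Fin d) (Fin d) ℝ :=
  fun i j => A (t, i) (t, j)

/-- The `t`-th block column of a `dT × dT` matrix, a `dT × d` matrix. -/
def colBlk {d T : ℕ} (A : Mat d T) (t : Fin T) : Matrix (Fin T × Fin d) (Fin d) ℝ :=
  fun p j => A p (t, j)

/-- Membership in `𝐋`: block lower triangular matrices. -/
def memL {d T : ℕ} (A : Mat d T) : Prop :=
  ∀ (t s : Fin T) (i j : Fin d), t < s → A (t, i) (s, j) = 0

/-- Membership in `𝐎`: block diagonal matrices with orthogonal `d × d` diagonal blocks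
(equivalently: block diagonal and orthogonal). -/
def memO {d T : ℕ} (O : Mat d T) : Prop :=
  (∀ (t s : Fin T) (i j : Fin d), t ≠ s → O (t, i) (s, j) = 0) ∧ Oᵀ * O = 1

/-- The Frobenius norm of a real matrix. -/
noncomputable def frobNorm {m n : Type*} [Fintype m] [Fintype n] (A : Matrix m n ℝ) : ℝ :=
  Real.sqrt (∑ i, ∑ j, (A i j) ^ 2)

/-- The Frobenius inner product of two real matrices. -/
noncomputable def frobInner {m n : Type*} [Fintype m] [Fintype n] (A B : Matrix m n ℝ) : ℝ :=
  ∑ i, ∑ j, A i j * B i j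

/-- The adapted Bures–Wasserstein distance `d_ABW(L, M) = inf_{O ∈ 𝐎} ‖L - M O‖_F`. -/
noncomputable def dABW {d T : ℕ} (L M : Mat d T) : ℝ :=
  sInf {r : ℝ | ∃ O : Mat d T, memO O ∧ r = frobNorm (L - M * O)}

/-- The set `𝐎*(L, M)` of optimizers of `inf_{O ∈ 𝐎} ‖L - M O‖_F`. -/
noncomputable def OStar {d T : ℕ} (L M : Mat d T) : Set (Mat d T) :=
  {O | memO O ∧ frobNorm (L - M * O) = dABW L M}

/-- The set `𝐕(L) = {M P - L : M ∈ 𝐋, P ∈ 𝐎*(L, M)}`. -/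
noncomputable def VSet {d T : ℕ} (L : Mat d T) : Set (Mat d T) :=
  {V | ∃ M P : Mat d T, memL M ∧ P ∈ OStar L M ∧ V = M * P - L}

/-- The set `𝒱(L) = {V ∈ 𝐋 : (Vᵀ L)_{t,t} is symmetric for all t}`. -/
def calV {d T : ℕ} (L : Mat d T) : Set (Mat d T) :=
  {V | memL V ∧ ∀ t : Fin T, (blk (Vᵀ * L) t).IsSymm}

/-- The set `𝐋^reg = {L ∈ 𝐋 : (Lᵀ L)_{t,t} is positive definite for all t}`. -/
def LReg {d T : ℕ} : Set (Mat d T) :=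
  {L | memL L ∧ ∀ t : Fin T, (blk (Lᵀ * L) t).PosDef}

/-- The sum of the singular values of a real square matrix `A`,
i.e. the trace of the positive semidefinite square root of `Aᵀ A`. -/
noncomputable def svSum {n : ℕ} (A : Matrix (Fin n) (Fin n) ℝ) : ℝ :=
  ((Matrix.posSemidef_conjTranspose_mul_self A).1.eigenvectorUnitary.1 *
    Matrix.diagonal (((↑) : ℝ → ℝ) ∘ (Real.sqrt ·) ∘
      (Matrix.posSemidef_conjTranspose_mul_self A).1.eigenvalues) *
    (star (Matrix.posSemidef_conjTranspose_mul_self A).1.eigenvectorUnitary :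
      Matrix (Fin n) (Fin n) ℝ)).trace

/-- The operator norm of a real matrix: the supremum of the euclidean norm `‖A x‖₂`
over the euclidean unit ball. -/
noncomputable def opNorm {m n : Type*} [Fintype m] [Fintype n] (A : Matrix m n ℝ) : ℝ :=
  sSup {r : ℝ | ∃ x : n → ℝ, (∑ j, (x j) ^ 2) ≤ 1 ∧ r = Real.sqrt (∑ i, (A.mulVec x i) ^ 2)}

attribute [local instance] Matrix.frobeniusSeminormedAddCommGroup
  Matrix.frobeniusNormedAddCommGroup Matrix.frobeniusNormedSpace
  Matrix.frobeniusIsBoundedSMul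

section Helpers

variable {m n : Type*} [Fintype m] [Fintype n]

lemma frobNorm_eq_norm (A : Matrix m n ℝ) : frobNorm A = ‖A‖ := by
  rw [Matrix.frobenius_norm_def, frobNorm, Real.sqrt_eq_rpow]
  congr 1
  refine Finset.sum_congr rfl fun i _ => Finset.sum_congr rfl fun j _ => ?_
  rw [Real.norm_eq_abs, Real.rpow_two, sq_abs]

lemma frobNorm_nonneg (A : Matrix m n ℝ) : 0 ≤ frobNorm A :=
  Real.sqrt_nonneg _

lemma frobInner_self_nonneg (A : Matrix m n ℝ) : 0 ≤ frobInner A A :=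
  Finset.sum_nonneg fun _ _ => Finset.sum_nonneg fun _ _ => mul_self_nonneg _

lemma frobInner_self_eq (A : Matrix m n ℝ) : frobInner A A = frobNorm A ^ 2 := by
  have hnn : 0 ≤ ∑ i, ∑ j, (A i j) ^ 2 := Finset.sum_nonneg fun _ _ => Finset.sum_nonneg
    fun _ _ => sq_nonneg _
  rw [frobNorm, Real.sq_sqrt hnn]
  simp [frobInner, sq]

lemma frobInner_comm (A B : Matrix m n ℝ) : frobInner A B = frobInner B A := by
  simp [frobInner, mul_comm]

lemma frobInner_sub_left (A B C : Matrix m n ℝ) :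
    frobInner (A - B) C = frobInner A C - frobInner B C := by
  simp [frobInner, sub_mul, Finset.sum_sub_distrib]

lemma frobInner_sub_right (A B C : Matrix m n ℝ) :
    frobInner A (B - C) = frobInner A B - frobInner A C := by
  simp [frobInner, mul_sub, Finset.sum_sub_distrib]

lemma frobInner_add_left (A B C : Matrix m n ℝ) :
    frobInner (A + B) C = frobInner A C + frobInner B C := by
  simp [frobInner, add_mul, Finset.sum_add_distrib]

lemma frobInner_add_right (A B C : Matrix m n ℝ) :
    frobInner A (B + C) = frobInner A B + frobInner A C := by
  simp [frobInner, mul_add, Finset.sum_add_distrib]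

lemma frobInner_smul_left (c : ℝ) (A B : Matrix m n ℝ) :
    frobInner (c • A) B = c * frobInner A B := by
  simp [frobInner, Finset.mul_sum, mul_assoc]

lemma frobInner_smul_right (c : ℝ) (A B : Matrix m n ℝ) :
    frobInner A (c • B) = c * frobInner A B := by
  simp [frobInner, Finset.mul_sum]
  ring_nf
  refine Finset.sum_congr rfl fun i _ => Finset.sum_congr rfl fun j _ => ?_
  ring

lemma frobInner_eq_trace (A B : Matrix m n ℝ) : frobInner A B = (Aᵀ * B).trace := by
  rw [Matrix.trace]
  simp only [Matrix.diag, Matrix.mul_apply, Matrix.transpose_apply, frobInner]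
  exact Finset.sum_comm

lemma frobInner_mul_orth {k : Type*} [Fintype k] [DecidableEq n]
    (A B : Matrix k n ℝ) (O : Matrix n n ℝ) (hO : Oᵀ * O = 1) :
    frobInner (A * O) (B * O) = frobInner A B := by
  have hO' : O * Oᵀ = 1 := mul_eq_one_comm.mp hO
  rw [frobInner_eq_trace, frobInner_eq_trace, Matrix.transpose_mul]
  have h1 : Oᵀ * Aᵀ * (B * O) = Oᵀ * (Aᵀ * B * O) := by
    simp only [Matrix.mul_assoc]
  rw [h1, Matrix.trace_mul_comm, Matrix.mul_assoc, hO', Matrix.mul_one]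

lemma frobNorm_mul_orth {k : Type*} [Fintype k] [DecidableEq n]
    (A : Matrix k n ℝ) (O : Matrix n n ℝ) (hO : Oᵀ * O = 1) :
    frobNorm (A * O) = frobNorm A := by
  have h := frobInner_mul_orth A A O hO
  rw [frobInner_self_eq, frobInner_self_eq] at h
  have := frobNorm_nonneg (A * O)
  have := frobNorm_nonneg A
  nlinarith

lemma abs_entry_le_frobNorm (A : Matrix m n ℝ) [DecidableEq m] [DecidableEq n]
    (i : m) (j : n) : |A i j| ≤ frobNorm A := by
  rw [frobNorm, ← Real.sqrt_sq_eq_abs]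
  apply Real.sqrt_le_sqrt
  calc A i j ^ 2 ≤ ∑ j', A i j' ^ 2 :=
        Finset.single_le_sum (f := fun j' => A i j' ^ 2) (fun _ _ => sq_nonneg _) (Finset.mem_univ j)
    _ ≤ ∑ i', ∑ j', A i' j' ^ 2 :=
        Finset.single_le_sum (f := fun i' => ∑ j', A i' j' ^ 2)
          (fun _ _ => Finset.sum_nonneg fun _ _ => sq_nonneg _) (Finset.mem_univ i)

variable {d T : ℕ}

lemma memO_one : memO (1 : Mat d T) := by
  constructor
  · intro t s i j hts
    exact Matrix.one_apply_ne (by simp [Prod.ext_iff, hts])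
  · simp

lemma memO_mul {A B : Mat d T} (hA : memO A) (hB : memO B) : memO (A * B) := by
  constructor
  · intro t s i j hts
    rw [Matrix.mul_apply]
    apply Finset.sum_eq_zero
    rintro ⟨r, k⟩ -
    by_cases hr : r = t
    · subst hr
      rw [hB.1 r s k j hts, mul_zero]
    · rw [hA.1 t r i k (fun h => hr h.symm), zero_mul]
  · rw [Matrix.transpose_mul, Matrix.mul_assoc, ← Matrix.mul_assoc Aᵀ, hA.2,
      Matrix.one_mul, hB.2]

lemma dABW_le {L M O : Mat d T} (hO : memO O) : dABW L M ≤ frobNorm (L - M * O) := by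
  apply csInf_le
  · exact ⟨0, fun r ⟨Q, _, hr⟩ => hr ▸ frobNorm_nonneg _⟩
  · exact ⟨O, hO, rfl⟩

lemma ostar_le {L M P Q : Mat d T} (hP : P ∈ OStar L M) (hQ : memO Q) :
    frobNorm (L - M * P) ≤ frobNorm (L - M * Q) := by
  rw [hP.2]; exact dABW_le hQ

lemma dABW_self (L : Mat d T) : dABW L L = 0 := by
  apply le_antisymm
  · have := dABW_le (L := L) (M := L) memO_one
    simpa [frobNorm] using this
  · exact le_csInf ⟨frobNorm (L - L * 1), 1, memO_one, rfl⟩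
      fun r ⟨Q, _, hr⟩ => hr ▸ frobNorm_nonneg _

end Helpers

/-- every accumulation point (with respect to the Frobenius norm) of a sequence
of optimizers `Oⁿ ∈ 𝐎*(L + uₙV, L + wW)` with `uₙ → 0` lies in `𝐎*(L,L)`. -/
theorem stmt17 (d T : ℕ) (hd : 0 < d) (hT : 0 < T) (L V W : Mat d T)
    (hL : memL L) (hV : V ∈ VSet L) (hW : W ∈ VSet L)
    (w : ℝ) (hw : w ∈ Set.Ico (0 : ℝ) 1)
    (u : ℕ → ℝ) (hu : ∀ n, u n ∈ Set.Icc (0 : ℝ) 1)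
    (hulim : Filter.Tendsto u Filter.atTop (nhds 0))
    (Oseq : ℕ → Mat d T) (hO : ∀ n, Oseq n ∈ OStar (L + u n • V) (L + w • W))
    (Olim : Mat d T) (φ : ℕ → ℕ) (hφ : StrictMono φ)
    (hlim : Filter.Tendsto (fun n => frobNorm (Oseq (φ n) - Olim)) Filter.atTop (nhds 0)) :
    Olim ∈ OStar L L := by
  
  obtain ⟨hw0, hw1⟩ := hw
  obtain ⟨M, P, hM, hP, hWdef'⟩ := hW
  have hOn : ∀ k, memO (Oseq k) := fun k => (hO k).1
  -- entrywise convergence along the subsequence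
  have hent : ∀ p q, Tendsto (fun k => Oseq (φ k) p q) atTop (𝓝 (Olim p q)) := by
    intro p q
    rw [← tendsto_sub_nhds_zero_iff]
    refine squeeze_zero_norm (fun k => ?_) hlim
    have h := abs_entry_le_frobNorm (Oseq (φ k) - Olim) p q
    simpa [Matrix.sub_apply] using h
  -- the limit is in 𝐎
  have hmemOlim : memO Olim := by
    constructor
    · intro t s i j hts
      have h0 : ∀ k : ℕ, Oseq (φ k) (t, i) (s, j) = 0 := fun k =>
        (hOn (φ k)).1 t s i j hts
      have h1 := hent (t, i) (s, j)
      simp only [h0] at h1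
      exact tendsto_nhds_unique h1 tendsto_const_nhds
    · ext p q
      have hc : ∀ k : ℕ, ∑ r, Oseq (φ k) r p * Oseq (φ k) r q = (1 : Mat d T) p q := by
        intro k
        have h2 := (hOn (φ k)).2
        have h3 := congrFun (congrFun h2 p) q
        simpa [Matrix.mul_apply, Matrix.transpose_apply] using h3
      have hT1 : Tendsto (fun k => ∑ r, Oseq (φ k) r p * Oseq (φ k) r q) atTop
          (𝓝 (∑ r, Olim r p * Olim r q)) :=
        tendsto_finset_sum _ fun r _ => (hent r p).mul (hent r q)
      simp only [hc] at hT1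
      have h4 := tendsto_nhds_unique hT1 tendsto_const_nhds
      rw [Matrix.mul_apply]
      simp only [Matrix.transpose_apply]
      exact h4
  have hOl : Olimᵀ * Olim = 1 := hmemOlim.2
  set Mw := L + w • W with hMw
  -- the limit optimizer is at least as good as the identity for (L, Mw)
  have hfle : frobNorm (L - Mw * Olim) ≤ w * frobNorm W := by
    have hb : ∀ k : ℕ, frobNorm (L - Mw * Olim) ≤
        w * frobNorm W + 2 * (u (φ k) * frobNorm V)
          + frobNorm Mw * frobNorm (Oseq (φ k) - Olim) := by
      intro k
      simp only [frobNorm_eq_norm]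
      have h1 : ‖L - Mw * Olim‖ ≤ ‖L - Mw * Oseq (φ k)‖ + ‖Mw * Oseq (φ k) - Mw * Olim‖ :=
        norm_sub_le_norm_sub_add_norm_sub _ _ _
      have h2 : ‖Mw * Oseq (φ k) - Mw * Olim‖ ≤ ‖Mw‖ * ‖Oseq (φ k) - Olim‖ := by
        rw [← Matrix.mul_sub]
        exact Matrix.frobenius_norm_mul _ _
      have h3 : ‖L - Mw * Oseq (φ k)‖ ≤
          ‖(L + u (φ k) • V) - Mw * Oseq (φ k)‖ + ‖u (φ k) • V‖ := by
        have he : L - Mw * Oseq (φ k)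
            = ((L + u (φ k) • V) - Mw * Oseq (φ k)) - u (φ k) • V := by abel
        rw [he]
        exact norm_sub_le _ _
      have h4 : ‖(L + u (φ k) • V) - Mw * Oseq (φ k)‖ ≤
          ‖(L + u (φ k) • V) - Mw * 1‖ := by
        have := ostar_le (hO (φ k)) memO_one
        simpa only [frobNorm_eq_norm] using this
      have h5 : ‖(L + u (φ k) • V) - Mw * 1‖ = ‖u (φ k) • V - w • W‖ := by
        rw [Matrix.mul_one, hMw]
        congr 1
        abel
      have h6 : ‖u (φ k) • V - w • W‖ ≤ u (φ k) * ‖V‖ + w * ‖W‖ := by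
        calc ‖u (φ k) • V - w • W‖ ≤ ‖u (φ k) • V‖ + ‖w • W‖ := norm_sub_le _ _
          _ = u (φ k) * ‖V‖ + w * ‖W‖ := by
              rw [norm_smul, norm_smul, Real.norm_eq_abs, Real.norm_eq_abs,
                abs_of_nonneg (hu (φ k)).1, abs_of_nonneg hw0]
      have h7 : ‖u (φ k) • V‖ = u (φ k) * ‖V‖ := by
        rw [norm_smul, Real.norm_eq_abs, abs_of_nonneg (hu (φ k)).1]
      linarith
    have hu2 : Tendsto (fun k => u (φ k)) atTop (𝓝 0) := hulim.comp hφ.tendsto_atTop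
    have hlim2 : Tendsto (fun k => w * frobNorm W + 2 * (u (φ k) * frobNorm V)
        + frobNorm Mw * frobNorm (Oseq (φ k) - Olim)) atTop (𝓝 (w * frobNorm W)) := by
      have := (tendsto_const_nhds (x := w * frobNorm W) (f := atTop (α := ℕ))).add
        (((hu2.mul_const (frobNorm V)).const_mul 2).add (hlim.const_mul (frobNorm Mw)))
      simpa [add_assoc] using this
    exact ge_of_tendsto' hlim2 hb
  -- decompose L - Mw * Olim
  have hsplit : L - Mw * Olim
      = (1 - w) • (L - L * Olim) + w • (L - M * P * Olim) := by
    rw [hMw, hWdef', Matrix.add_mul, Matrix.smul_mul, Matrix.sub_mul]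
    simp only [sub_smul, one_smul, smul_sub]
    abel
  -- orthogonal invariance facts
  have hinv1 : frobInner (L * Olim) (L * Olim) = frobInner L L :=
    frobInner_mul_orth L L Olim hOl
  have hinv2 : frobInner (L * Olim) (M * P * Olim) = frobInner L (M * P) :=
    frobInner_mul_orth L (M * P) Olim hOl
  have hinv3 : frobInner (M * P * Olim) (M * P * Olim) = frobInner (M * P) (M * P) :=
    frobInner_mul_orth (M * P) (M * P) Olim hOl
  -- optimality of P gives frobInner L (M*P*Olim) ≤ frobInner L (M*P)
  have hopt : frobNorm (L - M * P) ≤ frobNorm (L - M * P * Olim) := by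
    have := ostar_le hP (memO_mul hP.1 hmemOlim)
    rwa [← Matrix.mul_assoc] at this
  have hγδ : frobInner L (M * P * Olim) ≤ frobInner L (M * P) := by
    have h1 := pow_le_pow_left₀ (frobNorm_nonneg _) hopt 2
    rw [← frobInner_self_eq, ← frobInner_self_eq] at h1
    simp only [frobInner_sub_left, frobInner_sub_right] at h1
    have c1 := frobInner_comm (M * P) L
    have c2 := frobInner_comm (M * P * Olim) L
    linarith [h1, c1, c2, hinv3]
  -- inner product expansions
  have eaa : frobInner (L - L * Olim) (L - L * Olim)
      = 2 * frobInner L L - 2 * frobInner L (L * Olim) := by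
    simp only [frobInner_sub_left, frobInner_sub_right, hinv1,
      frobInner_comm (L * Olim) L]
    ring
  have eab : frobInner (L - L * Olim) (L - M * P * Olim)
      = frobInner L L - frobInner L (M * P * Olim) - frobInner L (L * Olim)
        + frobInner L (M * P) := by
    simp only [frobInner_sub_left, frobInner_sub_right, hinv2,
      frobInner_comm (L * Olim) L]
    ring
  have ebb : frobInner (L - M * P * Olim) (L - M * P * Olim)
      = frobInner L L - 2 * frobInner L (M * P * Olim)
        + frobInner (M * P) (M * P) := by
    simp only [frobInner_sub_left, frobInner_sub_right, hinv3,
      frobInner_comm (M * P * Olim) L]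
    ring
  have eWW : frobNorm W ^ 2
      = frobInner L L - 2 * frobInner L (M * P) + frobInner (M * P) (M * P) := by
    rw [← frobInner_self_eq, hWdef']
    simp only [frobInner_sub_left, frobInner_sub_right, frobInner_comm (M * P) L]
    ring
  -- the square expansion
  have hexp : frobNorm (L - Mw * Olim) ^ 2
      = (1 - w) ^ 2 * frobInner (L - L * Olim) (L - L * Olim)
        + 2 * ((1 - w) * w) * frobInner (L - L * Olim) (L - M * P * Olim)
        + w ^ 2 * frobInner (L - M * P * Olim) (L - M * P * Olim) := by
    rw [← frobInner_self_eq, hsplit]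
    simp only [frobInner_add_left, frobInner_add_right, frobInner_smul_left,
      frobInner_smul_right]
    rw [frobInner_comm (L - M * P * Olim) (L - L * Olim)]
    ring
  have hsq : frobNorm (L - Mw * Olim) ^ 2 ≤ (w * frobNorm W) ^ 2 :=
    pow_le_pow_left₀ (frobNorm_nonneg _) hfle 2
  have h5 : (1 - w) ^ 2 * (2 * frobInner L L - 2 * frobInner L (L * Olim))
      + 2 * ((1 - w) * w) * (frobInner L L - frobInner L (M * P * Olim)
          - frobInner L (L * Olim) + frobInner L (M * P))
      + w ^ 2 * (frobInner L L - 2 * frobInner L (M * P * Olim)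
          + frobInner (M * P) (M * P))
      ≤ w ^ 2 * (frobInner L L - 2 * frobInner L (M * P)
          + frobInner (M * P) (M * P)) := by
    calc _ = frobNorm (L - Mw * Olim) ^ 2 := by rw [hexp, eaa, eab, ebb]
      _ ≤ (w * frobNorm W) ^ 2 := hsq
      _ = _ := by rw [mul_pow, eWW]
  have hfin : frobInner (L - L * Olim) (L - L * Olim) ≤ 0 := by
    rw [eaa]
    nlinarith [h5, hγδ, hw0, hw1,
      mul_nonneg hw0 (sub_nonneg.mpr hγδ)]
  have h0 : frobInner (L - L * Olim) (L - L * Olim) = 0 :=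
    le_antisymm hfin (frobInner_self_nonneg _)
  have hn0 : frobNorm (L - L * Olim) = 0 := by
    have h2 := frobInner_self_eq (L - L * Olim)
    rw [h0] at h2
    have h3 := frobNorm_nonneg (L - L * Olim)
    nlinarith
  exact ⟨hmemOlim, by rw [hn0, dABW_self]⟩
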